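/- Let x₁ ≥ x₂ ≥ x₃ ≥ 0 with x₁ + x₂ + x₃ = 1 and x₁² + x₂² + x₃² = γ, where 1/3 ≤ γ ≤ 1. Then the minimum of H(x) = -∑ᵢ xᵢ log xᵢ over such triples is attained either at a point with x₁ = x₂ or at a point with x₃ = 0. -/

import Mathlib

/-- Shannon entropy of a triple, with `0 * log 0 = 0` (automatic since `Real.log 0 = 0`). -/
noncomputable def H3 (x₁ x₂ x₃ : ℝ) : ℝ :=
  -(x₁ * Real.log x₁) - x₂ * Real.log x₂ - x₃ * Real.log x₃

namespace EntropyMinAux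

noncomputable def DD (γ t : ℝ) : ℝ := -3*t^2 + 2*t + 2*γ - 1
noncomputable def uu (γ t : ℝ) : ℝ := ((1-t) + Real.sqrt (DD γ t))/2
noncomputable def ww (γ t : ℝ) : ℝ := ((1-t) - Real.sqrt (DD γ t))/2
noncomputable def G (γ t : ℝ) : ℝ := H3 (uu γ t) t (ww γ t)

lemma DD_eq (γ x₁ x₂ x₃ : ℝ) (hsum : x₁+x₂+x₃=1) (hsq : x₁^2+x₂^2+x₃^2=γ) :
    DD γ x₂ = (x₁-x₃)^2 := by
  unfold DD
  linear_combination (x₁+x₃+1-x₂)*hsum - 2*hsq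

/-- representation of a feasible point via its middle coordinate -/
lemma repr_feas (γ x₁ x₂ x₃ : ℝ) (h13 : x₃ ≤ x₁) (hsum : x₁+x₂+x₃=1)
    (hsq : x₁^2+x₂^2+x₃^2=γ) : uu γ x₂ = x₁ ∧ ww γ x₂ = x₃ := by
  have hD := DD_eq γ x₁ x₂ x₃ hsum hsq
  have hs : Real.sqrt (DD γ x₂) = x₁ - x₃ := by
    rw [hD, Real.sqrt_sq (by linarith)]
  refine ⟨?_, ?_⟩
  · unfold uu; rw [hs]; linarith
  · unfold ww; rw [hs]; linarith

lemma Q_eq (γ x₁ x₂ x₃ : ℝ) (hsum : x₁+x₂+x₃=1) (hsq : x₁^2+x₂^2+x₃^2=γ) :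
    6*x₂^2 - 4*x₂ + 1 - γ = -2*(x₁-x₂)*(x₂-x₃) := by
  linear_combination (-x₁+3*x₂-x₃-1)*hsum + hsq

lemma Q_nonpos (γ x₁ x₂ x₃ : ℝ) (h12 : x₂ ≤ x₁) (h23 : x₃ ≤ x₂)
    (hsum : x₁+x₂+x₃=1) (hsq : x₁^2+x₂^2+x₃^2=γ) :
    6*x₂^2 - 4*x₂ + 1 - γ ≤ 0 := by
  rw [Q_eq γ x₁ x₂ x₃ hsum hsq]
  nlinarith [mul_nonneg (sub_nonneg.2 h12) (sub_nonneg.2 h23)]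

lemma P_eq (γ x₁ x₂ x₃ : ℝ) (hsum : x₁+x₂+x₃=1) (hsq : x₁^2+x₂^2+x₃^2=γ) :
    2*x₂^2 - 2*x₂ + 1 - γ = 2*x₁*x₃ := by
  linear_combination (x₂-x₁-x₃-1)*hsum + hsq

lemma continuous_G (γ : ℝ) : Continuous (G γ) := by
  have hDD : Continuous (DD γ) := by unfold DD; continuity
  have hu : Continuous (uu γ) := by
    unfold uu; exact ((continuous_const.sub continuous_id).add
      (Real.continuous_sqrt.comp hDD)).div_const 2
  have hw : Continuous (ww γ) := by
    unfold ww; exact ((continuous_const.sub continuous_id).sub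
      (Real.continuous_sqrt.comp hDD)).div_const 2
  have hml := Real.continuous_mul_log
  unfold G H3
  exact (((hml.comp hu).neg).sub (hml.comp continuous_id)).sub (hml.comp hw)

lemma deriv_G_nonpos (γ t : ℝ) (ht : 0 < t) (hD : 0 < DD γ t)
    (hw : 0 < ww γ t) (hut : t ≤ uu γ t) (htw : ww γ t ≤ t) :
    ∃ E, HasDerivAt (G γ) E t ∧ E ≤ 0 := by
  set s := Real.sqrt (DD γ t) with hsdef
  have hs : 0 < s := Real.sqrt_pos.2 hD
  have hs2 : s^2 = DD γ t := Real.sq_sqrt hD.le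
  have hu : 0 < uu γ t := lt_of_lt_of_le ht hut
  -- derivative of DD
  have hDD' : HasDerivAt (DD γ) (2 - 6*t) t := by
    have h2 : HasDerivAt (fun x : ℝ => x^2) (2*t) t := by
      simpa using hasDerivAt_pow 2 t
    have h3 : HasDerivAt (fun x : ℝ => x) (1:ℝ) t := hasDerivAt_id t
    have h4 := ((h2.const_mul (-3:ℝ)).add (h3.const_mul (2:ℝ))).add_const (2*γ - 1)
    have hfg : DD γ = fun x : ℝ => (-3*x^2 + 2*x) + (2*γ - 1) := by
      funext x; unfold DD; ring
    rw [hfg]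
    exact h4.congr_deriv (by ring)
  have hsqrt' : HasDerivAt (fun x => Real.sqrt (DD γ x)) (1/(2*s) * (2-6*t)) t :=
    (Real.hasDerivAt_sqrt hD.ne').comp t hDD'
  have hlin : HasDerivAt (fun x : ℝ => 1 - x) (-1 : ℝ) t := by
    simpa using ((hasDerivAt_id t).const_sub (1:ℝ))
  have hu' : HasDerivAt (uu γ) ((-1 + 1/(2*s) * (2-6*t))/2) t := by
    unfold uu
    exact (hlin.add hsqrt').div_const 2
  have hw' : HasDerivAt (ww γ) ((-1 - 1/(2*s) * (2-6*t))/2) t := by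
    unfold ww
    exact (hlin.sub hsqrt').div_const 2
  have hmlu : HasDerivAt (fun x => uu γ x * Real.log (uu γ x))
      ((Real.log (uu γ t) + 1) * ((-1 + 1/(2*s) * (2-6*t))/2)) t :=
    (Real.hasDerivAt_mul_log hu.ne').comp t hu'
  have hmlt : HasDerivAt (fun x : ℝ => x * Real.log x) (Real.log t + 1) t :=
    Real.hasDerivAt_mul_log ht.ne'
  have hmlw : HasDerivAt (fun x => ww γ x * Real.log (ww γ x))
      ((Real.log (ww γ t) + 1) * ((-1 - 1/(2*s) * (2-6*t))/2)) t :=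
    (Real.hasDerivAt_mul_log hw.ne').comp t hw'
  have hG : HasDerivAt (G γ)
      (-( (Real.log (uu γ t) + 1) * ((-1 + 1/(2*s) * (2-6*t))/2))
        - (Real.log t + 1)
        - (Real.log (ww γ t) + 1) * ((-1 - 1/(2*s) * (2-6*t))/2)) t := by
    unfold G H3
    exact (hmlu.neg.sub hmlt).sub hmlw
  refine ⟨_, hG, ?_⟩
  -- now the sign of the derivative
  set u := uu γ t with hudef
  set w := ww γ t with hwdef
  have hu_eq : u = ((1-t) + s)/2 := by rw [hudef, hsdef]; rfl
  have hw_eq : w = ((1-t) - s)/2 := by rw [hwdef, hsdef]; rfl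
  set Lu := Real.log u with hLu
  set Lt := Real.log t with hLt
  set Lw := Real.log w with hLw
  have hA0 : 0 ≤ u - t := by linarith
  have hB0 : 0 ≤ t - w := by linarith
  -- log inequalities
  have hL1 : t * (Lu - Lt) ≤ u - t := by
    have h := Real.log_le_sub_one_of_pos (show (0:ℝ) < u/t from div_pos hu ht)
    rw [Real.log_div hu.ne' ht.ne'] at h
    have h2 : t * (Real.log u - Real.log t) ≤ t * (u/t - 1) :=
      mul_le_mul_of_nonneg_left h ht.le
    have h3 : t * (u/t - 1) = u - t := by field_simp
    rw [hLu, hLt]; linarith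
  have hL2 : t - w ≤ t * (Lt - Lw) := by
    have h := Real.log_le_sub_one_of_pos (show (0:ℝ) < w/t from div_pos hw ht)
    rw [Real.log_div hw.ne' ht.ne'] at h
    have h2 : t * (Real.log w - Real.log t) ≤ t * (w/t - 1) :=
      mul_le_mul_of_nonneg_left h ht.le
    have h3 : t * (w/t - 1) = w - t := by field_simp
    rw [hLt, hLw]; linarith
  have hL1nn : 0 ≤ Lu - Lt := by
    rw [hLu, hLt]
    have := Real.log_le_log ht hut
    linarith
  have hL2nn : 0 ≤ Lt - Lw := by
    rw [hLt, hLw]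
    have := Real.log_le_log hw htw
    linarith
  -- key: (t-w)*(Lu-Lt) ≤ (u-t)*(Lt-Lw)
  have hkey : (t-w) * (Lu - Lt) ≤ (u-t) * (Lt - Lw) := by
    have h1 : t * ((t-w) * (Lu - Lt)) ≤ (t-w) * (u-t) := by
      have := mul_le_mul_of_nonneg_left hL1 hB0
      nlinarith
    have h2 : (u-t) * (t-w) ≤ t * ((u-t) * (Lt - Lw)) := by
      have := mul_le_mul_of_nonneg_left hL2 hA0
      nlinarith
    nlinarith
  -- identity: s * E = (t-w)*(Lu-Lt) - (u-t)*(Lt-Lw)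
  have hse : s * (-( (Lu + 1) * ((-1 + 1/(2*s) * (2-6*t))/2))
        - (Lt + 1)
        - (Lw + 1) * ((-1 - 1/(2*s) * (2-6*t))/2))
      = (t-w) * (Lu - Lt) - (u-t) * (Lt - Lw) := by
    rw [hu_eq, hw_eq]
    field_simp
    ring
  have hsE : s * (-( (Lu + 1) * ((-1 + 1/(2*s) * (2-6*t))/2))
        - (Lt + 1)
        - (Lw + 1) * ((-1 - 1/(2*s) * (2-6*t))/2)) ≤ 0 := by
    rw [hse]; linarith
  by_contra hc
  push_neg at hc
  nlinarith [mul_pos hs hc]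

lemma DD_pos_on (γ lo hi t : ℝ) (h1 : 0 < DD γ lo) (h2 : 0 < DD γ hi)
    (hl : lo ≤ t) (hr : t ≤ hi) : 0 < DD γ t := by
  unfold DD at *
  rcases le_or_gt (2 - 3*(t+lo)) 0 with h | h
  · nlinarith [mul_nonneg (sub_nonneg.2 hr) (by linarith : (0:ℝ) ≤ 3*(t+hi) - 2)]
  · nlinarith [mul_nonneg (sub_nonneg.2 hl) h.le]

lemma Q_nonpos_on (γ lo hi t : ℝ) (h1 : 6*lo^2-4*lo+1-γ ≤ 0) (h2 : 6*hi^2-4*hi+1-γ ≤ 0)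
    (hl : lo ≤ t) (hr : t ≤ hi) : 6*t^2-4*t+1-γ ≤ 0 := by
  rcases le_or_gt (6*(t+lo) - 4) 0 with h | h
  · nlinarith [mul_nonneg (sub_nonneg.2 hl) (by linarith : (0:ℝ) ≤ 4 - 6*(t+lo))]
  · nlinarith [mul_nonneg (sub_nonneg.2 hr) (by linarith : (0:ℝ) ≤ 6*(t+hi) - 4)]

/-- The main monotonicity lemma: G is antitone on the feasible interval. -/
lemma G_anti (γ lo hi : ℝ) (hlh : lo ≤ hi) (hlo : 0 < lo) (hhalf : hi ≤ 1/2)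
    (hDlo : 0 < DD γ lo) (hDhi : 0 < DD γ hi)
    (hQlo : 6*lo^2-4*lo+1-γ ≤ 0) (hQhi : 6*hi^2-4*hi+1-γ ≤ 0)
    (hP : ∀ t, lo < t → t < hi → 0 < 2*t^2-2*t+1-γ) :
    G γ hi ≤ G γ lo := by
  have key : ∀ t ∈ Set.Ioo lo hi, ∃ E, HasDerivAt (G γ) E t ∧ E ≤ 0 := by
    intro t ht
    obtain ⟨ht1, ht2⟩ := ht
    have htpos : 0 < t := lt_trans hlo ht1
    have hDt : 0 < DD γ t := DD_pos_on γ lo hi t hDlo hDhi ht1.le ht2.le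
    have hQt : 6*t^2-4*t+1-γ ≤ 0 := Q_nonpos_on γ lo hi t hQlo hQhi ht1.le ht2.le
    have hPt : 0 < 2*t^2-2*t+1-γ := hP t ht1 ht2
    set s := Real.sqrt (DD γ t) with hsdef
    have hs0 : 0 ≤ s := Real.sqrt_nonneg _
    have hs2 : s^2 = DD γ t := Real.sq_sqrt hDt.le
    have hDD_expand : DD γ t = -3*t^2 + 2*t + 2*γ - 1 := by rw [DD]
    have hs3a : 3*t - 1 ≤ s := by
      rcases le_or_gt (3*t-1) 0 with h | h
      · linarith
      · rw [hsdef, Real.le_sqrt h.le hDt.le]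
        rw [hDD_expand]; nlinarith [hQt]
    have hs3b : 1 - 3*t ≤ s := by
      rcases le_or_gt (1-3*t) 0 with h | h
      · linarith
      · rw [hsdef, Real.le_sqrt h.le hDt.le]
        rw [hDD_expand]; nlinarith [hQt]
    have ht12 : t < 1/2 := lt_of_lt_of_le ht2 hhalf
    have hs4 : s < 1 - t := by
      have h1t : (0:ℝ) < 1 - t := by linarith
      have hlt : DD γ t < (1-t)^2 := by rw [hDD_expand]; nlinarith [hPt]
      calc s = Real.sqrt (DD γ t) := hsdef
        _ < Real.sqrt ((1-t)^2) := Real.sqrt_lt_sqrt hDt.le hlt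
        _ = 1 - t := Real.sqrt_sq h1t.le
    have hut : t ≤ uu γ t := by
      unfold uu; rw [← hsdef]; linarith
    have htw : ww γ t ≤ t := by
      unfold ww; rw [← hsdef]; linarith
    have hwpos : 0 < ww γ t := by
      unfold ww; rw [← hsdef]; linarith
    exact deriv_G_nonpos γ t htpos hDt hwpos hut htw
  have hanti : AntitoneOn (G γ) (Set.Icc lo hi) := by
    apply antitoneOn_of_deriv_nonpos (convex_Icc lo hi)
      ((continuous_G γ).continuousOn)
    · intro t ht
      rw [interior_Icc] at ht
      obtain ⟨E, hE, _⟩ := key t ht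
      exact hE.differentiableAt.differentiableWithinAt
    · intro t ht
      rw [interior_Icc] at ht
      obtain ⟨E, hE, hE0⟩ := key t ht
      rw [hE.deriv]; exact hE0
  exact hanti (Set.left_mem_Icc.2 hlh) (Set.right_mem_Icc.2 hlh) hlh

end EntropyMinAux

set_option maxHeartbeats 2000000 in
/-- For decreasing triples of nonnegative reals with sum 1 and sum of squares γ ∈ [1/3, 1],
the minimum of the Shannon entropy is attained either at a point with `x₁ = x₂`,
or at a point with `x₃ = 0`. -/
theorem entropy_min_triple (γ : ℝ) (hγ₁ : 1 / 3 ≤ γ) (hγ₂ : γ ≤ 1) :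
    ∃ y₁ y₂ y₃ : ℝ, y₁ ≥ y₂ ∧ y₂ ≥ y₃ ∧ y₃ ≥ 0 ∧
      y₁ + y₂ + y₃ = 1 ∧ y₁ ^ 2 + y₂ ^ 2 + y₃ ^ 2 = γ ∧
      (y₁ = y₂ ∨ y₃ = 0) ∧
      ∀ x₁ x₂ x₃ : ℝ, x₁ ≥ x₂ → x₂ ≥ x₃ → x₃ ≥ 0 →
        x₁ + x₂ + x₃ = 1 → x₁ ^ 2 + x₂ ^ 2 + x₃ ^ 2 = γ →
        H3 y₁ y₂ y₃ ≤ H3 x₁ x₂ x₃ := by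
  rcases eq_or_lt_of_le hγ₁ with hγ3 | hγ3
  · -- γ = 1/3 : only feasible point is (1/3,1/3,1/3)
    refine ⟨1/3, 1/3, 1/3, by norm_num, by norm_num, by norm_num, by norm_num,
      by rw [← hγ3]; norm_num, Or.inl rfl, ?_⟩
    intro x₁ x₂ x₃ h12 h23 h3 hsum hsq
    have hg : x₁^2+x₂^2+x₃^2 = 1/3 := by rw [hsq, ← hγ3]
    have h1 : x₁ = 1/3 := by nlinarith [sq_nonneg (x₁-x₂), sq_nonneg (x₂-x₃), sq_nonneg (x₁-x₃)]
    have h2 : x₂ = 1/3 := by nlinarith [sq_nonneg (x₁-x₂), sq_nonneg (x₂-x₃), sq_nonneg (x₁-x₃)]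
    have h3' : x₃ = 1/3 := by nlinarith [sq_nonneg (x₁-x₂), sq_nonneg (x₂-x₃), sq_nonneg (x₁-x₃)]
    rw [h1, h2, h3']
  · rcases le_or_gt γ (1/2) with hhalf | hhalf
    · -- Case A: 1/3 < γ ≤ 1/2, minimizer (a,a,1-2a), a = (2+s)/6, s = √(6γ-2)
      obtain ⟨s, hs0, hs2⟩ : ∃ s : ℝ, 0 < s ∧ s^2 = 6*γ-2 :=
        ⟨Real.sqrt (6*γ-2), Real.sqrt_pos.2 (by linarith), Real.sq_sqrt (by linarith)⟩
      have hs1 : s ≤ 1 := by nlinarith [hs2, hs0]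
      refine ⟨(2+s)/6, (2+s)/6, (1-s)/3, le_refl _, by linarith, by linarith,
        by ring, by linear_combination hs2/6, Or.inl rfl, ?_⟩
      intro x₁ x₂ x₃ h12 h23 h3 hsum hsq
      have hx2pos : 0 < x₂ := by
        rcases lt_or_eq_of_le (le_trans h3 h23) with h | h
        · exact h
        · exfalso
          have hx2 : x₂ = 0 := h.symm
          have hx3 : x₃ = 0 := le_antisymm (hx2 ▸ h23) h3
          have hx1 : x₁ = 1 := by rw [hx2, hx3] at hsum; linarith
          rw [hx1, hx2, hx3] at hsq; norm_num at hsq; linarith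
      have h13 : x₃ < x₁ := by
        rcases lt_or_eq_of_le (le_trans h23 h12) with h | h
        · exact h
        · exfalso
          have heq : x₁ = x₃ := h.symm
          have e1 : x₁ = x₂ := le_antisymm (by linarith) h12
          have e2 : x₁ = 1/3 := by
            have hx : x₁ + x₁ + x₁ = 1 := by
              calc x₁ + x₁ + x₁ = x₁ + x₂ + x₃ := by rw [← e1, heq]
              _ = 1 := hsum
            linarith
          have : γ = 1/3 := by
            rw [← hsq]
            have e3 : x₂ = 1/3 := by rw [← e1]; exact e2
            have e4 : x₃ = 1/3 := by rw [← heq]; exact e2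
            rw [e2, e3, e4]; norm_num
          linarith
      obtain ⟨hi, hhidef⟩ : ∃ h : ℝ, h = (2+s)/6 := ⟨_, rfl⟩
      have hysum : hi + hi + (1-s)/3 = 1 := by rw [hhidef]; ring
      have hysq : hi^2 + hi^2 + ((1-s)/3)^2 = γ := by
        rw [hhidef]; linear_combination hs2/6
      have hy13 : (1-s)/3 < hi := by rw [hhidef]; linarith
      have hQx := EntropyMinAux.Q_nonpos γ x₁ x₂ x₃ h12 h23 hsum hsq
      have hQy : 6*hi^2 - 4*hi + 1 - γ = 0 := by
        rw [hhidef]; linear_combination hs2/6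
      have hhi13 : 1/3 ≤ hi := by rw [hhidef]; linarith
      have hhi12 : hi ≤ 1/2 := by rw [hhidef]; linarith
      have hxhi : x₂ ≤ hi := by
        by_contra hc
        push_neg at hc
        have hprod : 0 < (x₂ - hi) * (6*(x₂+hi) - 4) :=
          mul_pos (by linarith) (by linarith)
        have hexp : (x₂ - hi) * (6*(x₂+hi) - 4)
            = (6*x₂^2-4*x₂+1-γ) - (6*hi^2-4*hi+1-γ) := by ring
        linarith [hQx, hQy, hprod, hexp]
      have hDx : 0 < EntropyMinAux.DD γ x₂ := by
        rw [EntropyMinAux.DD_eq γ x₁ x₂ x₃ hsum hsq]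
        exact pow_pos (by linarith) 2
      have hDy : 0 < EntropyMinAux.DD γ hi := by
        rw [EntropyMinAux.DD_eq γ hi hi ((1-s)/3) hysum hysq]
        exact pow_pos (by linarith) 2
      have hP : ∀ t, x₂ < t → t < hi → 0 < 2*t^2-2*t+1-γ := by
        intro t ht1 ht2
        have htlt : t < 1/2 := by linarith
        have hsq2 : (0:ℝ) < (t - 1/2)^2 := by
          have hne : (t - 1/2)^2 ≠ 0 := pow_ne_zero 2 (sub_ne_zero.2 (ne_of_lt htlt))
          exact lt_of_le_of_ne (sq_nonneg _) (Ne.symm hne)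
        have hid : 2*t^2-2*t+1-γ = 2*(t-1/2)^2 + (1/2 - γ) := by ring
        linarith [hsq2, hid]
      obtain ⟨hux, hwx⟩ := EntropyMinAux.repr_feas γ x₁ x₂ x₃ h13.le hsum hsq
      obtain ⟨huy, hwy⟩ := EntropyMinAux.repr_feas γ hi hi ((1-s)/3) hy13.le hysum hysq
      have hGx : EntropyMinAux.G γ x₂ = H3 x₁ x₂ x₃ := by
        unfold EntropyMinAux.G; rw [hux, hwx]
      have hGy : EntropyMinAux.G γ hi = H3 hi hi ((1-s)/3) := by
        unfold EntropyMinAux.G; rw [huy, hwy]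
      have hfin := EntropyMinAux.G_anti γ x₂ hi hxhi hx2pos hhi12
        hDx hDy hQx (le_of_eq hQy) hP
      rw [hGx, hGy] at hfin
      rw [← hhidef]
      exact hfin
    · -- Case B: 1/2 < γ ≤ 1, minimizer (p, 1-p, 0), p = (1+r)/2, r = √(2γ-1)
      obtain ⟨r, hr0, hr2⟩ : ∃ r : ℝ, 0 < r ∧ r^2 = 2*γ-1 :=
        ⟨Real.sqrt (2*γ-1), Real.sqrt_pos.2 (by linarith), Real.sq_sqrt (by linarith)⟩
      have hr1 : r ≤ 1 := by nlinarith [hr2, hr0]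
      refine ⟨(1+r)/2, (1-r)/2, 0, by linarith, by linarith, le_refl _,
        by ring, by linear_combination hr2/2, Or.inr rfl, ?_⟩
      intro x₁ x₂ x₃ h12 h23 h3 hsum hsq
      obtain ⟨hi, hhidef⟩ : ∃ h : ℝ, h = (1-r)/2 := ⟨_, rfl⟩
      have hysum : (1+r)/2 + hi + 0 = 1 := by rw [hhidef]; ring
      have hysq : ((1+r)/2)^2 + hi^2 + (0:ℝ)^2 = γ := by
        rw [hhidef]; linear_combination hr2/2
      have hy13 : (0:ℝ) ≤ (1+r)/2 := by linarith
      rcases lt_or_eq_of_le (le_trans h3 h23) with hx2pos | hx2z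
      · have h13 : x₃ < x₁ := by
          rcases lt_or_eq_of_le (le_trans h23 h12) with h | h
          · exact h
          · exfalso
            have heq : x₁ = x₃ := h.symm
            have e1 : x₁ = x₂ := le_antisymm (by linarith) h12
            have e2 : x₁ = 1/3 := by
              have : x₁ + x₁ + x₁ = 1 := by
                calc x₁ + x₁ + x₁ = x₁ + x₂ + x₃ := by rw [← e1, heq]
                _ = 1 := hsum
              linarith
            have : γ = 1/3 := by
              rw [← hsq]
              have e3 : x₂ = 1/3 := by rw [← e1]; exact e2
              have e4 : x₃ = 1/3 := by rw [← heq]; exact e2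
              rw [e2, e3, e4]; norm_num
            linarith
        have hPx : 2*x₂^2 - 2*x₂ + 1 - γ = 2*x₁*x₃ :=
          EntropyMinAux.P_eq γ x₁ x₂ x₃ hsum hsq
        have hx1pos : 0 < x₁ := lt_of_lt_of_le hx2pos h12
        have hPxnn : 0 ≤ 2*x₂^2 - 2*x₂ + 1 - γ := by
          rw [hPx]
          exact mul_nonneg (by linarith) h3
        have hPy : 2*hi^2 - 2*hi + 1 - γ = 0 := by
          rw [hhidef]; linear_combination hr2/2
        have hx212 : x₂ ≤ 1/2 := by linarith
        have hhi12 : hi ≤ 1/2 := by rw [hhidef]; linarith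
        have hxhi : x₂ ≤ hi := by
          by_contra hc
          push_neg at hc
          have hprod : 0 < (x₂ - hi) * (2 - 2*(x₂+hi)) :=
            mul_pos (by linarith) (by linarith)
          have hexp : (x₂ - hi) * (2 - 2*(x₂+hi))
              = (2*hi^2-2*hi+1-γ) - (2*x₂^2-2*x₂+1-γ) := by ring
          linarith [hPxnn, hPy, hprod, hexp]
        have hQx := EntropyMinAux.Q_nonpos γ x₁ x₂ x₃ h12 h23 hsum hsq
        have hQy := EntropyMinAux.Q_nonpos γ ((1+r)/2) hi 0
          (by rw [hhidef]; linarith) (by rw [hhidef]; linarith) hysum hysq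
        have hDx : 0 < EntropyMinAux.DD γ x₂ := by
          rw [EntropyMinAux.DD_eq γ x₁ x₂ x₃ hsum hsq]
          exact pow_pos (by linarith) 2
        have hDy : 0 < EntropyMinAux.DD γ hi := by
          rw [EntropyMinAux.DD_eq γ ((1+r)/2) hi 0 hysum hysq]
          exact pow_pos (by linarith) 2
        have hP : ∀ t, x₂ < t → t < hi → 0 < 2*t^2-2*t+1-γ := by
          intro t ht1 ht2
          have hprod : 0 < (hi - t) * (1 - t - hi) :=
            mul_pos (by linarith) (by linarith)
          have hexp : 2*t^2-2*t+1-γ = (2*hi^2-2*hi+1-γ) + 2*((hi - t) * (1 - t - hi)) := by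
            ring
          linarith [hPy, hprod, hexp]
        obtain ⟨hux, hwx⟩ := EntropyMinAux.repr_feas γ x₁ x₂ x₃ h13.le hsum hsq
        obtain ⟨huy, hwy⟩ := EntropyMinAux.repr_feas γ ((1+r)/2) hi 0 hy13 hysum hysq
        have hGx : EntropyMinAux.G γ x₂ = H3 x₁ x₂ x₃ := by
          unfold EntropyMinAux.G; rw [hux, hwx]
        have hGy : EntropyMinAux.G γ hi = H3 ((1+r)/2) hi 0 := by
          unfold EntropyMinAux.G; rw [huy, hwy]
        have hfin := EntropyMinAux.G_anti γ x₂ hi hxhi hx2pos hhi12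
          hDx hDy hQx hQy hP
        rw [hGx, hGy] at hfin
        rw [← hhidef]
        exact hfin
      · -- x₂ = 0 : then x₃ = 0, x₁ = 1, γ = 1, and y = (1,0,0)
        have hx2 : x₂ = 0 := hx2z.symm
        have hx3 : x₃ = 0 := le_antisymm (hx2 ▸ h23) h3
        have hx1 : x₁ = 1 := by rw [hx2, hx3] at hsum; linarith
        have hγ1 : γ = 1 := by rw [← hsq, hx1, hx2, hx3]; norm_num
        have hr21 : r^2 = 1 := by rw [hγ1] at hr2; linarith
        have hre : r = 1 := by
          have hfac : (r-1)*(r+1) = 0 := by linear_combination hr21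
          rcases mul_eq_zero.1 hfac with h | h
          · linarith
          · linarith
        rw [hre, hx1, hx2, hx3]
        norm_num
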